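/- Let (X,d) be a metric space and let (x_n), (y_n) be two FD-sequences (sequences with finite distance-series). Then (x_n) and (y_n) are Cauchy equivalent (i.e. d(x_n, y_n) → 0) if and only if there exists an interlaced sequence, alternating x_{m_1}, y_{m_1}, y_{m_2}, x_{m_2}, x_{m_3}, y_{m_3}, ... along increasing indices, which itself has finite distance-series. -/
import Mathlib

open Filter Finset
set_option maxHeartbeats 1000000

private lemma summable_div_two {D : ℕ → ℝ} (h0 : ∀ j, 0 ≤ D j) (hD : Summable D) :
    Summable (fun k => D (k / 2)) := by
  apply summable_of_sum_range_le (c := 2 * ∑' j, D j) (fun k => h0 _)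
  intro n
  calc ∑ k ∈ range n, D (k / 2)
      ≤ ∑ k ∈ range (2 * n), D (k / 2) := by
        apply Finset.sum_le_sum_of_subset_of_nonneg
        · exact Finset.range_subset_range.2 (by omega)
        · intro i _ _; exact h0 _
    _ = 2 * ∑ j ∈ range n, D j := by
        induction n with
        | zero => simp
        | succ n ih =>
          have h2 : 2 * (n + 1) = (2 * n) + 1 + 1 := by ring
          rw [h2, Finset.sum_range_succ, Finset.sum_range_succ, ih,
            Finset.sum_range_succ]
          have e1 : (2 * n) / 2 = n := by omega
          have e2 : (2 * n + 1) / 2 = n := by omega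
          rw [e1, e2]; ring
    _ ≤ 2 * ∑' j, D j := by
        have := Summable.sum_le_tsum (range n) (fun i _ => h0 i) hD
        linarith

/-- Summability of the "jump" distances along a monotone subsequence. -/
private lemma summable_jumps {X : Type*} [MetricSpace X] (x : ℕ → X) (m : ℕ → ℕ)
    (hmono : StrictMono m)
    (hx : Summable (fun k => dist (x k) (x (k + 1)))) :
    Summable (fun j => dist (x (m j)) (x (m (j + 1)))) := by
  apply summable_of_sum_range_le (c := ∑' k, dist (x k) (x (k + 1)))
    (fun j => dist_nonneg)
  intro n
  have key : ∀ n : ℕ, ∑ j ∈ range n, dist (x (m j)) (x (m (j + 1)))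
      ≤ ∑ i ∈ Ico (m 0) (m n), dist (x i) (x (i + 1)) := by
    intro n
    induction n with
    | zero => simp
    | succ n ih =>
      rw [Finset.sum_range_succ,
        ← Finset.sum_Ico_consecutive (fun i => dist (x i) (x (i + 1)))
          (hmono.monotone (Nat.zero_le n)) (hmono.monotone (Nat.le_succ n))]
      exact add_le_add ih (dist_le_Ico_sum_dist x (hmono.monotone (Nat.le_succ n)))
  exact le_trans (key n) (Summable.sum_le_tsum _ (fun i _ => dist_nonneg) hx)

/-- Tail bound: distance from `x n` to any later point is at most the tail sum. -/
private lemma dist_le_tail {X : Type*} [MetricSpace X] (x : ℕ → X)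
    (hx : Summable (fun k => dist (x k) (x (k + 1)))) {n p : ℕ} (h : n ≤ p) :
    dist (x n) (x p) ≤ ∑' k, dist (x (k + n)) (x (k + n + 1)) := by
  have h1 : dist (x n) (x p) ≤ ∑ i ∈ Ico n p, dist (x i) (x (i + 1)) :=
    dist_le_Ico_sum_dist x h
  rw [Finset.sum_Ico_eq_sum_range] at h1
  refine h1.trans ?_
  have hsum : Summable (fun k => dist (x (k + n)) (x (k + n + 1))) :=
    (summable_nat_add_iff n).2 hx
  refine le_trans (le_of_eq ?_) (Summable.sum_le_tsum (range (p - n)) (fun i _ => dist_nonneg) hsum)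
  exact Finset.sum_congr rfl (fun i _ => by rw [add_comm n i])

/-- Two FD-sequences `(xₙ)`, `(yₙ)` in a metric space are Cauchy
equivalent (`dist (xₙ) (yₙ) → 0`) iff there is an interlaced sequence
`x_{m₀}, y_{m₀}, y_{m₁}, x_{m₁}, x_{m₂}, y_{m₂}, …` along strictly increasing
indices which itself has finite distance-series. -/
theorem stmt3 {X : Type*} [MetricSpace X] (x y : ℕ → X)
    (hx : Summable (fun k => dist (x k) (x (k + 1))))
    (hy : Summable (fun k => dist (y k) (y (k + 1)))) :
    Filter.Tendsto (fun n => dist (x n) (y n)) Filter.atTop (nhds 0) ↔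
      ∃ m : ℕ → ℕ, StrictMono m ∧
        Summable (fun k =>
          dist ((fun n => if n % 4 = 0 ∨ n % 4 = 3 then x (m (n / 2)) else y (m (n / 2))) k)
               ((fun n => if n % 4 = 0 ∨ n % 4 = 3 then x (m (n / 2)) else y (m (n / 2))) (k + 1))) := by
  constructor
  · intro h
    obtain ⟨m, hmono, hm⟩ := Filter.extraction_forall_of_eventually
      (P := fun j k => dist (x k) (y k) < (1 / 2 : ℝ) ^ j)
      (fun j => h.eventually (gt_mem_nhds (by positivity)))
    refine ⟨m, hmono, ?_⟩
    set z : ℕ → X := fun n => if n % 4 = 0 ∨ n % 4 = 3 then x (m (n / 2)) else y (m (n / 2))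
      with hz
    set a : ℕ → ℝ := fun k => (1 / 2 : ℝ) ^ (k / 2) with ha
    set b : ℕ → ℝ := fun k => dist (x (m (k / 2))) (x (m (k / 2 + 1))) with hb
    set c : ℕ → ℝ := fun k => dist (y (m (k / 2))) (y (m (k / 2 + 1))) with hc
    have hA : Summable a := summable_div_two (fun j => by positivity)
      (summable_geometric_of_lt_one (by norm_num) (by norm_num))
    have hB : Summable b := summable_div_two (fun j => dist_nonneg)
      (summable_jumps x m hmono hx)
    have hC : Summable c := summable_div_two (fun j => dist_nonneg)
      (summable_jumps y m hmono hy)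
    refine Summable.of_nonneg_of_le (fun k => dist_nonneg) ?_ ((hA.add hB).add hC)
    intro k
    have hb0 : 0 ≤ b k := dist_nonneg
    have hc0 : 0 ≤ c k := dist_nonneg
    have ha0 : 0 ≤ a k := by positivity
    have hak : a k = (1 / 2 : ℝ) ^ (k / 2) := rfl
    have hbk : b k = dist (x (m (k / 2))) (x (m (k / 2 + 1))) := rfl
    have hck : c k = dist (y (m (k / 2))) (y (m (k / 2 + 1))) := rfl
    show dist (z k) (z (k + 1)) ≤ a k + b k + c k
    have hcases : k % 4 = 0 ∨ k % 4 = 1 ∨ k % 4 = 2 ∨ k % 4 = 3 := by omega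
    rcases hcases with h0 | h1 | h2 | h3
    · have zk : z k = x (m (k / 2)) := if_pos (by omega)
      have zk1 : z (k + 1) = y (m ((k + 1) / 2)) := if_neg (by omega)
      have e2 : (k + 1) / 2 = k / 2 := by omega
      rw [zk, zk1, e2]
      have := hm (k / 2)
      linarith
    · have zk : z k = y (m (k / 2)) := if_neg (by omega)
      have zk1 : z (k + 1) = y (m ((k + 1) / 2)) := if_neg (by omega)
      have e2 : (k + 1) / 2 = k / 2 + 1 := by omega
      rw [zk, zk1, e2]
      linarith
    · have zk : z k = y (m (k / 2)) := if_neg (by omega)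
      have zk1 : z (k + 1) = x (m ((k + 1) / 2)) := if_pos (by omega)
      have e2 : (k + 1) / 2 = k / 2 := by omega
      rw [zk, zk1, e2, dist_comm]
      have := hm (k / 2)
      linarith
    · have zk : z k = x (m (k / 2)) := if_pos (by omega)
      have zk1 : z (k + 1) = x (m ((k + 1) / 2)) := if_pos (by omega)
      have e2 : (k + 1) / 2 = k / 2 + 1 := by omega
      rw [zk, zk1, e2]
      linarith
  · rintro ⟨m, hmono, hsum⟩
    set z : ℕ → X := fun n => if n % 4 = 0 ∨ n % 4 = 3 then x (m (n / 2)) else y (m (n / 2))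
      with hz
    set f : ℕ → ℝ := fun k => dist (z k) (z (k + 1)) with hf
    have hf2 : ∀ j, dist (x (m j) ) (y (m j)) = f (2 * j) := by
      intro j
      have e2 : (2 * j) / 2 = j := by omega
      have e3 : (2 * j + 1) / 2 = j := by omega
      show dist (x (m j)) (y (m j)) = dist (z (2 * j)) (z (2 * j + 1))
      rcases Nat.even_or_odd j with ⟨t, ht⟩ | ⟨t, ht⟩
      · have zk : z (2 * j) = x (m ((2 * j) / 2)) := if_pos (by omega)
        have zk1 : z (2 * j + 1) = y (m ((2 * j + 1) / 2)) := if_neg (by omega)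
        rw [zk, zk1, e2, e3]
      · have zk : z (2 * j) = y (m ((2 * j) / 2)) := if_neg (by omega)
        have zk1 : z (2 * j + 1) = x (m ((2 * j + 1) / 2)) := if_pos (by omega)
        rw [zk, zk1, e2, e3, dist_comm]
    have hfz : Tendsto (fun j => f (2 * j)) atTop (nhds 0) :=
      hsum.tendsto_atTop_zero.comp
        (tendsto_atTop_mono (fun j => by show j ≤ 2 * j; omega) tendsto_id)
    have key : ∀ n, dist (x n) (y n) ≤
        (∑' k, dist (x (k + n)) (x (k + n + 1))) + ∑' k, dist (y (k + n)) (y (k + n + 1)) := by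
      intro n
      have hev : ∀ᶠ j in atTop, dist (x n) (y n)
          - (∑' k, dist (x (k + n)) (x (k + n + 1)))
          - (∑' k, dist (y (k + n)) (y (k + n + 1))) ≤ f (2 * j) := by
        filter_upwards [eventually_ge_atTop n] with j hj
        have hmn : n ≤ m j := le_trans hj (hmono.le_apply)
        have h1 : dist (x n) (y n) ≤ dist (x n) (x (m j)) + dist (x (m j)) (y (m j))
            + dist (y (m j)) (y n) := dist_triangle4 _ _ _ _
        have h2 := dist_le_tail x hx hmn
        have h3 : dist (y (m j)) (y n) ≤ ∑' k, dist (y (k + n)) (y (k + n + 1)) := by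
          rw [dist_comm]; exact dist_le_tail y hy hmn
        have h4 := hf2 j
        linarith
      have := ge_of_tendsto hfz hev
      linarith
    refine squeeze_zero (fun n => dist_nonneg) key ?_
    have t1 : Tendsto (fun n => ∑' k, dist (x (k + n)) (x (k + n + 1))) atTop (nhds 0) := by
      simpa using tendsto_sum_nat_add (fun k => dist (x k) (x (k + 1)))
    have t2 : Tendsto (fun n => ∑' k, dist (y (k + n)) (y (k + n + 1))) atTop (nhds 0) := by
      simpa using tendsto_sum_nat_add (fun k => dist (y k) (y (k + 1)))
    simpa using t1.add t2
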